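/- If x ∈ GL₆(𝕂) has lower right 2×2 corner block equal to zero, then x·x_left does not belong to Lie(P)·x + x·Lie(P)^τ. -/
import Mathlib


open Matrix

/-- The Lie algebra of the parabolic `P ⊆ GL₆(𝕂)`: block upper triangular `6 × 6`
matrices with respect to the partition `(2,2,2)` of `6`. -/
def LieP (𝕂 : Type*) [RCLike 𝕂] : Set (Matrix (Fin 6) (Fin 6) 𝕂) :=
  {p | ∀ i j : Fin 6, (j : ℕ) / 2 < (i : ℕ) / 2 → p i j = 0}

/-- `Lie(P)^τ`, the image of `Lie(P)` under matrix transpose. -/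
def LiePtau (𝕂 : Type*) [RCLike 𝕂] : Set (Matrix (Fin 6) (Fin 6) 𝕂) :=
  {q | qᵀ ∈ LieP 𝕂}

/-- The block matrix `x_left = [[0,I₂,0],[0,0,I₂],[0,0,0]]` (2×2 blocks). -/
def xLeft (𝕂 : Type*) [RCLike 𝕂] : Matrix (Fin 6) (Fin 6) 𝕂 :=
  Matrix.of fun i j => if (j : ℕ) = (i : ℕ) + 2 then 1 else 0

/-- `x_right = x_left^τ`. -/
def xRight (𝕂 : Type*) [RCLike 𝕂] : Matrix (Fin 6) (Fin 6) 𝕂 := (xLeft 𝕂)ᵀ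

/-- The set `Lie(P)·x + x·Lie(P)^τ = {p·x + x·q : p ∈ Lie(P), q ∈ Lie(P)^τ}`. -/
def tanSet {𝕂 : Type*} [RCLike 𝕂] (x : Matrix (Fin 6) (Fin 6) 𝕂) :
    Set (Matrix (Fin 6) (Fin 6) 𝕂) :=
  {m | ∃ p ∈ LieP 𝕂, ∃ q ∈ LiePtau 𝕂, m = p * x + x * q}

/-- The lower right `i × j` corner block of a `6 × 6` matrix. -/
def corner {𝕂 : Type*} [RCLike 𝕂] (i j : ℕ) (hi : i ≤ 6) (hj : j ≤ 6)
    (x : Matrix (Fin 6) (Fin 6) 𝕂) : Matrix (Fin i) (Fin j) 𝕂 :=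
  Matrix.of fun a b =>
    x ⟨6 - i + a.1, by have := a.2; omega⟩ ⟨6 - j + b.1, by have := b.2; omega⟩

/-- The rank matrix `R(x) = [[r₄ₓ₄(x), r₄ₓ₂(x)], [r₂ₓ₄(x), r₂ₓ₂(x)]]`, where
`r_{i×j}(x)` is the rank of the lower right `i × j` corner block of `x`. -/
noncomputable def rankMatrix {𝕂 : Type*} [RCLike 𝕂] (x : Matrix (Fin 6) (Fin 6) 𝕂) :
    Matrix (Fin 2) (Fin 2) ℕ :=
  !![(corner 4 4 (by norm_num) (by norm_num) x).rank,
     (corner 4 2 (by norm_num) (by norm_num) x).rank;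
     (corner 2 4 (by norm_num) (by norm_num) x).rank,
     (corner 2 2 (by norm_num) (by norm_num) x).rank]

/-- If `x ∈ GL₆(𝕂)` has lower right `2 × 2` corner block equal to zero, then
`x·x_left ∉ Lie(P)·x + x·Lie(P)^τ`. -/
theorem xLeft_transversal_of_corner_zero {𝕂 : Type*} [RCLike 𝕂]
    (x : Matrix (Fin 6) (Fin 6) 𝕂) (hx : IsUnit x.det)
    (hzero : ∀ i j : Fin 6, 4 ≤ (i : ℕ) → 4 ≤ (j : ℕ) → x i j = 0) :
    x * xLeft 𝕂 ∉ tanSet x := by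
  rintro ⟨p, hp, q, hq, h⟩
  have hp' : ∀ a b : Fin 6, (b : ℕ) / 2 < (a : ℕ) / 2 → p a b = 0 := hp
  have hq' : ∀ a b : Fin 6, (a : ℕ) / 2 < (b : ℕ) / 2 → q a b = 0 := fun a b hab => hq b a hab
  have he : ∀ i j : Fin 6,
      (((((if (j:ℕ) = 2 then x i 0 else 0) + if (j:ℕ) = 3 then x i 1 else 0) +
        if (j:ℕ) = 4 then x i 2 else 0) + if (j:ℕ) = 5 then x i 3 else 0)) =
      (p i 0 * x 0 j + p i 1 * x 1 j + p i 2 * x 2 j + p i 3 * x 3 j +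
        p i 4 * x 4 j + p i 5 * x 5 j) +
      (x i 0 * q 0 j + x i 1 * q 1 j + x i 2 * q 2 j + x i 3 * q 3 j +
        x i 4 * q 4 j + x i 5 * q 5 j) := by
    intro i j
    have e := congrFun (congrFun h i) j
    simp only [Matrix.mul_apply, Fin.sum_univ_six, xLeft, Matrix.of_apply,
      Matrix.add_apply] at e
    norm_num [show ((0:Fin 6):ℕ) = 0 from rfl, show ((1:Fin 6):ℕ) = 1 from rfl,
      show ((2:Fin 6):ℕ) = 2 from rfl, show ((3:Fin 6):ℕ) = 3 from rfl,
      show ((4:Fin 6):ℕ) = 4 from rfl, show ((5:Fin 6):ℕ) = 5 from rfl] at e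
    have hj := j.isLt
    rw [if_neg (by omega : ¬((j:ℕ) = 6)), if_neg (by omega : ¬((j:ℕ) = 7)),
      add_zero, add_zero] at e
    linear_combination e
  have s42 : x 4 2 = 0 := by
    have e := he 4 4
    simp only [show ((4:Fin 6):ℕ) = 4 from rfl, hp' 4 0 (by decide), hp' 4 1 (by decide),
      hp' 4 2 (by decide), hp' 4 3 (by decide), hq' 0 4 (by decide), hq' 1 4 (by decide),
      hq' 2 4 (by decide), hq' 3 4 (by decide), hzero 4 4 (by decide) (by decide),
      hzero 5 4 (by decide) (by decide), hzero 4 5 (by decide) (by decide),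
      hzero 5 5 (by decide) (by decide), mul_zero, zero_mul, add_zero, zero_add] at e
    simpa using e
  have s43 : x 4 3 = 0 := by
    have e := he 4 5
    simp only [show ((5:Fin 6):ℕ) = 5 from rfl, hp' 4 0 (by decide), hp' 4 1 (by decide),
      hp' 4 2 (by decide), hp' 4 3 (by decide), hq' 0 5 (by decide), hq' 1 5 (by decide),
      hq' 2 5 (by decide), hq' 3 5 (by decide), hzero 4 4 (by decide) (by decide),
      hzero 5 4 (by decide) (by decide), hzero 4 5 (by decide) (by decide),
      hzero 5 5 (by decide) (by decide), mul_zero, zero_mul, add_zero, zero_add] at e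
    simpa using e
  have s52 : x 5 2 = 0 := by
    have e := he 5 4
    simp only [show ((4:Fin 6):ℕ) = 4 from rfl, hp' 5 0 (by decide), hp' 5 1 (by decide),
      hp' 5 2 (by decide), hp' 5 3 (by decide), hq' 0 4 (by decide), hq' 1 4 (by decide),
      hq' 2 4 (by decide), hq' 3 4 (by decide), hzero 4 4 (by decide) (by decide),
      hzero 5 4 (by decide) (by decide), hzero 4 5 (by decide) (by decide),
      hzero 5 5 (by decide) (by decide), mul_zero, zero_mul, add_zero, zero_add] at e
    simpa using e
  have s53 : x 5 3 = 0 := by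
    have e := he 5 5
    simp only [show ((5:Fin 6):ℕ) = 5 from rfl, hp' 5 0 (by decide), hp' 5 1 (by decide),
      hp' 5 2 (by decide), hp' 5 3 (by decide), hq' 0 5 (by decide), hq' 1 5 (by decide),
      hq' 2 5 (by decide), hq' 3 5 (by decide), hzero 4 4 (by decide) (by decide),
      hzero 5 4 (by decide) (by decide), hzero 4 5 (by decide) (by decide),
      hzero 5 5 (by decide) (by decide), mul_zero, zero_mul, add_zero, zero_add] at e
    simpa using e
  have s40 : x 4 0 = 0 := by
    have e := he 4 2
    simp only [show ((2:Fin 6):ℕ) = 2 from rfl, hp' 4 0 (by decide), hp' 4 1 (by decide),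
      hp' 4 2 (by decide), hp' 4 3 (by decide), hq' 0 2 (by decide), hq' 1 2 (by decide),
      s42, s43, s52, s53, hzero 4 4 (by decide) (by decide), hzero 5 4 (by decide) (by decide),
      hzero 4 5 (by decide) (by decide), hzero 5 5 (by decide) (by decide),
      mul_zero, zero_mul, add_zero, zero_add] at e
    simpa using e
  have s41 : x 4 1 = 0 := by
    have e := he 4 3
    simp only [show ((3:Fin 6):ℕ) = 3 from rfl, hp' 4 0 (by decide), hp' 4 1 (by decide),
      hp' 4 2 (by decide), hp' 4 3 (by decide), hq' 0 3 (by decide), hq' 1 3 (by decide),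
      s42, s43, s52, s53, hzero 4 4 (by decide) (by decide), hzero 5 4 (by decide) (by decide),
      hzero 4 5 (by decide) (by decide), hzero 5 5 (by decide) (by decide),
      mul_zero, zero_mul, add_zero, zero_add] at e
    simpa using e
  have hrow : ∀ j : Fin 6, x 4 j = 0 := by
    intro j
    fin_cases j
    exacts [s40, s41, s42, s43, hzero 4 4 (by decide) (by decide),
      hzero 4 5 (by decide) (by decide)]
  have hdet : x.det = 0 := Matrix.det_eq_zero_of_row_eq_zero 4 hrow
  rw [hdet] at hx
  exact not_isUnit_zero hx
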